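/- Let σ be a finite sequence of updates (i, Δ) ∈ [n] × ℤ, and for t ≤ len(σ) let x^(t) denote the partial sum vector (frequency of the first t updates). Suppose every partial state satisfies |x^(t)_i| ≤ 2M−1 for all coordinates i, and the final vector x satisfies x_i ∈ {−M, M} for all i. If for some coordinate i and some split σ = σ₁·σ₂ we have min over t of (freq σ₂^(t))_i ≤ (freq σ₂)_i − M, then x_i = M. -/
import Mathlib


/-- The frequency vector of a stream: coordinatewise sum of updates. -/
def freq {n : ℕ} (σ : List (Fin n × ℤ)) : Fin n → ℤ :=
  fun i => (σ.map fun u => if u.1 = i then u.2 else 0).sum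

lemma freq_append {n : ℕ} (a b : List (Fin n × ℤ)) (i : Fin n) :
    freq (a ++ b) i = freq a i + freq b i := by
  simp [freq]

/-- If every partial state of the stream `σ₁ ++ σ₂` lies in `[-(2M-1), 2M-1]ⁿ`,
the final vector lies in `{-M, M}ⁿ`, and for some coordinate `i` the running value of
`σ₂` at coordinate `i` dips at least `M` below its final value, then the final value of
coordinate `i` is `M`. -/
theorem statement0 {n : ℕ} (M : ℤ) (hM : 1 ≤ M) (σ₁ σ₂ : List (Fin n × ℤ))
    (hbox : ∀ t ≤ (σ₁ ++ σ₂).length, ∀ j : Fin n,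
      |freq ((σ₁ ++ σ₂).take t) j| ≤ 2 * M - 1)
    (hfin : ∀ j : Fin n, freq (σ₁ ++ σ₂) j = -M ∨ freq (σ₁ ++ σ₂) j = M)
    (i : Fin n)
    (hmin : ∃ t ≤ σ₂.length, freq (σ₂.take t) i ≤ freq σ₂ i - M) :
    freq (σ₁ ++ σ₂) i = M := by
  obtain ⟨t, ht, hdip⟩ := hmin
  rcases hfin i with h | h
  · exfalso
    have htake : (σ₁ ++ σ₂).take (σ₁.length + t) = σ₁ ++ σ₂.take t := by
      rw [List.take_append]
      simp
    have hb := hbox (σ₁.length + t) (by simp; omega) i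
    rw [htake, freq_append] at hb
    have h2 : freq σ₁ i + freq σ₂ i = -M := by rw [← freq_append]; exact h
    have := abs_le.mp hb
    omega
  · exact h
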